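/- Let m,n ≥ 2 and a,b,h,A,B,p ≥ 0 and q be integers with a ≤ m-1, b ≤ n-1, B ≤ n-1, r := (a+1)(b+1)-1-h, 0 < r < (m-1)(n-1), and suppose (a,b) maximizes (m-a'-1)(n-b'-1) over pairs (a',b') with 0 ≤ a' ≤ m-1, 0 ≤ b' ≤ n-1, (a'+1)(b'+1)-1-r ≥ 0. Assume A+2-m ≤ 0, q > 0, B < p, A+2-m ≤ q ≤ A, and p(m-1) + (q - (A+2-m)) = an + bm - h + m - An - B - 2. Then t₂ := Ap + q + B satisfies t₂ ≤ r. -/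
import Mathlib


/-- Case (1) of the key combinatorial claim: if `q > 0` and `B < p`, then
`t₂ = Ap + q + B ≤ r = (a+1)(b+1)-1-h`. -/
theorem case_one (m n a b h A B p q : ℤ) (hm : 2 ≤ m) (hn : 2 ≤ n)
    (ha0 : 0 ≤ a) (hb0 : 0 ≤ b) (hh : 0 ≤ h) (hA : 0 ≤ A) (hB0 : 0 ≤ B) (hp0 : 0 ≤ p)
    (ha1 : a ≤ m - 1) (hb1 : b ≤ n - 1) (hB1 : B ≤ n - 1)
    (hr0 : 0 < (a + 1) * (b + 1) - 1 - h)
    (hr1 : (a + 1) * (b + 1) - 1 - h < (m - 1) * (n - 1))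
    (hmax : ∀ a' b' : ℤ, 0 ≤ a' → a' ≤ m - 1 → 0 ≤ b' → b' ≤ n - 1 →
      0 ≤ (a' + 1) * (b' + 1) - 1 - ((a + 1) * (b + 1) - 1 - h) →
      (m - a' - 1) * (n - b' - 1) ≤ (m - a - 1) * (n - b - 1))
    (hAm : A + 2 - m ≤ 0) (hq0 : 0 < q) (hBp : B < p)
    (hq1 : A + 2 - m ≤ q) (hq2 : q ≤ A)
    (heq : p * (m - 1) + (q - (A + 2 - m)) = a * n + b * m - h + m - A * n - B - 2) :
    A * p + q + B ≤ (a + 1) * (b + 1) - 1 - h := by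
  have key : (a + 1) * (b + 1) - 1 - h - (A * p + q + B)
      = (m - a - 1) * (n - b - 1) - (m - A - 1) * (n - p - 1) := by
    linear_combination -heq
  by_cases hcase : n - p - 1 ≤ 0
  · have h1 : (m - A - 1) * (n - p - 1) ≤ 0 :=
      mul_nonpos_of_nonneg_of_nonpos (by linarith) hcase
    have h2 : 0 ≤ (m - a - 1) * (n - b - 1) :=
      mul_nonneg (by linarith) (by linarith)
    linarith
  · push_neg at hcase
    by_cases hr : 0 ≤ (A + 1) * (p + 1) - 1 - ((a + 1) * (b + 1) - 1 - h)
    · have := hmax A p hA (by linarith) hp0 (by linarith) hr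
      linarith
    · push_neg at hr
      nlinarith [mul_le_mul_of_nonneg_right hq2 hp0]
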